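/- Let x, y, z ∈ ℝ³ be unit vectors and let d ≥ 1. Define the 3×3 array B of 4d×4d complex matrices with entries B 0 0 = (σ(x) ⊗ 1₂) ⊗ 1_d, B 0 1 = (1₂ ⊗ σ(x)) ⊗ 1_d, B 0 2 = (σ(x) ⊗ σ(x)) ⊗ 1_d, B 1 0 = (1₂ ⊗ σ(z)) ⊗ 1_d, B 1 1 = (σ(z) ⊗ 1₂) ⊗ 1_d, B 1 2 = (σ(z) ⊗ σ(z)) ⊗ 1_d, B 2 0 = (σ(x) ⊗ σ(z)) ⊗ 1_d, B 2 1 = (σ(z) ⊗ σ(x)) ⊗ 1_d, B 2 2 = (σ(y) ⊗ σ(y)) ⊗ 1_d, where ⊗ is the Kronecker product, 1₂ the 2×2 identity and 1_d the d×d identity. Then {x, y, z} is an orthonormal basis of ℝ³ if and only if B satisfies the magic square equations. -/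

import Mathlib

open Matrix
open scoped Kronecker

/-- The Pauli matrix σ_x. -/
def pauliX : Matrix (Fin 2) (Fin 2) ℂ := !![0, 1; 1, 0]

/-- The Pauli matrix σ_y. -/
def pauliY : Matrix (Fin 2) (Fin 2) ℂ := !![0, -Complex.I; Complex.I, 0]

/-- The Pauli matrix σ_z. -/
def pauliZ : Matrix (Fin 2) (Fin 2) ℂ := !![1, 0; 0, -1]

/-- The Pauli vector map σ : ℝ³ → M₂(ℂ), a ↦ a₁•σ_x + a₂•σ_y + a₃•σ_z. -/
def pauliVec (a : Fin 3 → ℝ) : Matrix (Fin 2) (Fin 2) ℂ :=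
  (a 0 : ℂ) • pauliX + (a 1 : ℂ) • pauliY + (a 2 : ℂ) • pauliZ

/-- The dot product on ℝ³. -/
def dot3 (u v : Fin 3 → ℝ) : ℝ := u 0 * v 0 + u 1 * v 1 + u 2 * v 2

/-- A 3×3 array of square complex matrices satisfies the magic square equations:
entries in the same row commute, entries in the same column commute, each row
multiplies to 1, the first two columns multiply to 1, and the last column
multiplies to -1. -/
def MagicSquare {n : Type*} [Fintype n] [DecidableEq n]
    (A : Fin 3 → Fin 3 → Matrix n n ℂ) : Prop :=
  (∀ i j j', A i j * A i j' = A i j' * A i j) ∧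
  (∀ j i i', A i j * A i' j = A i' j * A i j) ∧
  (∀ i, A i 0 * A i 1 * A i 2 = 1) ∧
  (∀ j : Fin 3, j ≠ 2 → A 0 j * A 1 j * A 2 j = 1) ∧
  A 0 2 * A 1 2 * A 2 2 = -1

/-- The Peres–Mermin style table built from σ(x), σ(y), σ(z), padded by a d×d
identity tensor factor. -/
def magicB (x y z : Fin 3 → ℝ) (d : ℕ) :
    Fin 3 → Fin 3 → Matrix ((Fin 2 × Fin 2) × Fin d) ((Fin 2 × Fin 2) × Fin d) ℂ :=
  ![![(pauliVec x ⊗ₖ (1 : Matrix (Fin 2) (Fin 2) ℂ)) ⊗ₖ (1 : Matrix (Fin d) (Fin d) ℂ),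
      ((1 : Matrix (Fin 2) (Fin 2) ℂ) ⊗ₖ pauliVec x) ⊗ₖ (1 : Matrix (Fin d) (Fin d) ℂ),
      (pauliVec x ⊗ₖ pauliVec x) ⊗ₖ (1 : Matrix (Fin d) (Fin d) ℂ)],
    ![((1 : Matrix (Fin 2) (Fin 2) ℂ) ⊗ₖ pauliVec z) ⊗ₖ (1 : Matrix (Fin d) (Fin d) ℂ),
      (pauliVec z ⊗ₖ (1 : Matrix (Fin 2) (Fin 2) ℂ)) ⊗ₖ (1 : Matrix (Fin d) (Fin d) ℂ),
      (pauliVec z ⊗ₖ pauliVec z) ⊗ₖ (1 : Matrix (Fin d) (Fin d) ℂ)],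
    ![(pauliVec x ⊗ₖ pauliVec z) ⊗ₖ (1 : Matrix (Fin d) (Fin d) ℂ),
      (pauliVec z ⊗ₖ pauliVec x) ⊗ₖ (1 : Matrix (Fin d) (Fin d) ℂ),
      (pauliVec y ⊗ₖ pauliVec y) ⊗ₖ (1 : Matrix (Fin d) (Fin d) ℂ)]]

def cross3 (u v : Fin 3 → ℝ) : Fin 3 → ℝ :=
  ![u 1 * v 2 - u 2 * v 1, u 2 * v 0 - u 0 * v 2, u 0 * v 1 - u 1 * v 0]

@[simp] lemma pauliVec_00 (a : Fin 3 → ℝ) : pauliVec a 0 0 = (a 2 : ℂ) := by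
  simp [pauliVec, pauliX, pauliY, pauliZ]
@[simp] lemma pauliVec_01 (a : Fin 3 → ℝ) : pauliVec a 0 1 = (a 0 : ℂ) - a 1 * Complex.I := by
  simp [pauliVec, pauliX, pauliY, pauliZ] <;> ring_nf
@[simp] lemma pauliVec_10 (a : Fin 3 → ℝ) : pauliVec a 1 0 = (a 0 : ℂ) + a 1 * Complex.I := by
  simp [pauliVec, pauliX, pauliY, pauliZ] <;> ring_nf
@[simp] lemma pauliVec_11 (a : Fin 3 → ℝ) : pauliVec a 1 1 = -(a 2 : ℂ) := by
  simp [pauliVec, pauliX, pauliY, pauliZ]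

lemma pauli_mul (a b : Fin 3 → ℝ) :
    pauliVec a * pauliVec b
      = ((dot3 a b : ℝ) : ℂ) • 1 + Complex.I • pauliVec (cross3 a b) := by
  ext i j
  fin_cases i <;> fin_cases j <;>
    simp [Matrix.mul_apply, Fin.sum_univ_two, dot3, cross3, Matrix.one_apply] <;>
    push_cast <;> ring_nf <;> simp [Complex.I_sq] <;> ring

lemma pauliVec_zero' (a : Fin 3 → ℝ) (h : ∀ i, a i = 0) : pauliVec a = 0 := by
  simp [pauliVec, h 0, h 1, h 2]

lemma pauliVec_smul' (t : ℝ) (a b : Fin 3 → ℝ) (h : ∀ i, a i = t * b i) :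
    pauliVec a = (t : ℂ) • pauliVec b := by
  ext i j
  fin_cases i <;> fin_cases j <;> simp [h 0, h 1, h 2] <;> push_cast <;> ring

lemma pauliVec_neg' (a b : Fin 3 → ℝ) (h : ∀ i, a i = -b i) :
    pauliVec a = -pauliVec b := by
  have := pauliVec_smul' (-1) a b (by intro i; rw [h i]; ring)
  simpa using this

lemma dot3_comm (a b : Fin 3 → ℝ) : dot3 a b = dot3 b a := by unfold dot3; ring

lemma cross3_self (a : Fin 3 → ℝ) (i : Fin 3) : cross3 a a i = 0 := by
  fin_cases i <;> simp [cross3] <;> ring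

lemma cross3_swap (a b : Fin 3 → ℝ) (i : Fin 3) : cross3 b a i = -cross3 a b i := by
  fin_cases i <;> simp [cross3] <;> ring

lemma lagrange (a b : Fin 3 → ℝ) :
    dot3 (cross3 a b) (cross3 a b) = dot3 a a * dot3 b b - dot3 a b ^ 2 := by
  simp [dot3, cross3]; ring

lemma bac_cab (a b c : Fin 3 → ℝ) (i : Fin 3) :
    cross3 (cross3 a b) c i = dot3 a c * b i - dot3 b c * a i := by
  fin_cases i <;> simp [dot3, cross3] <;> ring


lemma cross3_zero_left (u v : Fin 3 → ℝ) (h : ∀ i, u i = 0) (i : Fin 3) :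
    cross3 u v i = 0 := by
  fin_cases i <;> simp [cross3, h 0, h 1, h 2]

lemma pauli_sq (a : Fin 3 → ℝ) (h : dot3 a a = 1) : pauliVec a * pauliVec a = 1 := by
  rw [pauli_mul, h, pauliVec_zero' _ (cross3_self a)]
  simp

lemma pauli_anticomm (a b : Fin 3 → ℝ) (h : dot3 a b = 0) :
    pauliVec b * pauliVec a = -(pauliVec a * pauliVec b) := by
  rw [pauli_mul, pauli_mul, h, dot3_comm b a, h,
    pauliVec_neg' (cross3 b a) (cross3 a b) (cross3_swap a b)]
  simp

lemma kron_comm_of {A B C D : Matrix (Fin 2) (Fin 2) ℂ} (h1 : A * C = C * A)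
    (h2 : B * D = D * B) : (A ⊗ₖ B) * (C ⊗ₖ D) = (C ⊗ₖ D) * (A ⊗ₖ B) := by
  rw [← Matrix.mul_kronecker_mul, ← Matrix.mul_kronecker_mul, h1, h2]

lemma neg_kron (A : Matrix (Fin 2) (Fin 2) ℂ) (B : Matrix (Fin 2) (Fin 2) ℂ) :
    (-A) ⊗ₖ B = -(A ⊗ₖ B) := by
  ext ⟨i, j⟩ ⟨k, l⟩; simp [Matrix.kroneckerMap_apply]

lemma kron_neg (A : Matrix (Fin 2) (Fin 2) ℂ) (B : Matrix (Fin 2) (Fin 2) ℂ) :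
    A ⊗ₖ (-B) = -(A ⊗ₖ B) := by
  ext ⟨i, j⟩ ⟨k, l⟩; simp [Matrix.kroneckerMap_apply]

lemma kron_comm_of_anti {A B C D : Matrix (Fin 2) (Fin 2) ℂ} (h1 : C * A = -(A * C))
    (h2 : D * B = -(B * D)) : (A ⊗ₖ B) * (C ⊗ₖ D) = (C ⊗ₖ D) * (A ⊗ₖ B) := by
  rw [← Matrix.mul_kronecker_mul, ← Matrix.mul_kronecker_mul, h1, h2, neg_kron, kron_neg, neg_neg]

def B4 (x y z : Fin 3 → ℝ) : Fin 3 → Fin 3 → Matrix (Fin 2 × Fin 2) (Fin 2 × Fin 2) ℂ :=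
  ![![pauliVec x ⊗ₖ (1 : Matrix (Fin 2) (Fin 2) ℂ),
      (1 : Matrix (Fin 2) (Fin 2) ℂ) ⊗ₖ pauliVec x,
      pauliVec x ⊗ₖ pauliVec x],
    ![(1 : Matrix (Fin 2) (Fin 2) ℂ) ⊗ₖ pauliVec z,
      pauliVec z ⊗ₖ (1 : Matrix (Fin 2) (Fin 2) ℂ),
      pauliVec z ⊗ₖ pauliVec z],
    ![pauliVec x ⊗ₖ pauliVec z,
      pauliVec z ⊗ₖ pauliVec x,
      pauliVec y ⊗ₖ pauliVec y]]


lemma fin3_mk0 (h : 0 < 3) : (⟨0, h⟩ : Fin 3) = 0 := rfl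
lemma fin3_mk1 (h : 1 < 3) : (⟨1, h⟩ : Fin 3) = 1 := rfl
lemma fin3_mk2 (h : 2 < 3) : (⟨2, h⟩ : Fin 3) = 2 := rfl

@[simp] lemma B4_00 (x y z : Fin 3 → ℝ) : B4 x y z 0 0 = pauliVec x ⊗ₖ (1 : Matrix (Fin 2) (Fin 2) ℂ) := rfl
@[simp] lemma B4_01 (x y z : Fin 3 → ℝ) : B4 x y z 0 1 = (1 : Matrix (Fin 2) (Fin 2) ℂ) ⊗ₖ pauliVec x := rfl
@[simp] lemma B4_02 (x y z : Fin 3 → ℝ) : B4 x y z 0 2 = pauliVec x ⊗ₖ pauliVec x := rfl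
@[simp] lemma B4_10 (x y z : Fin 3 → ℝ) : B4 x y z 1 0 = (1 : Matrix (Fin 2) (Fin 2) ℂ) ⊗ₖ pauliVec z := rfl
@[simp] lemma B4_11 (x y z : Fin 3 → ℝ) : B4 x y z 1 1 = pauliVec z ⊗ₖ (1 : Matrix (Fin 2) (Fin 2) ℂ) := rfl
@[simp] lemma B4_12 (x y z : Fin 3 → ℝ) : B4 x y z 1 2 = pauliVec z ⊗ₖ pauliVec z := rfl
@[simp] lemma B4_20 (x y z : Fin 3 → ℝ) : B4 x y z 2 0 = pauliVec x ⊗ₖ pauliVec z := rfl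
@[simp] lemma B4_21 (x y z : Fin 3 → ℝ) : B4 x y z 2 1 = pauliVec z ⊗ₖ pauliVec x := rfl
@[simp] lemma B4_22 (x y z : Fin 3 → ℝ) : B4 x y z 2 2 = pauliVec y ⊗ₖ pauliVec y := rfl

lemma magicB_eq (x y z : Fin 3 → ℝ) (d : ℕ) :
    magicB x y z d = fun i j => B4 x y z i j ⊗ₖ (1 : Matrix (Fin d) (Fin d) ℂ) := by
  funext i j
  fin_cases i <;> fin_cases j <;> rfl

lemma kron_one_inj {d : ℕ} (hd : 1 ≤ d)
    {M N : Matrix (Fin 2 × Fin 2) (Fin 2 × Fin 2) ℂ}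
    (h : M ⊗ₖ (1 : Matrix (Fin d) (Fin d) ℂ) = N ⊗ₖ (1 : Matrix (Fin d) (Fin d) ℂ)) :
    M = N := by
  ext p q
  have := Matrix.ext_iff.2 h (p, ⟨0, hd⟩) (q, ⟨0, hd⟩)
  simpa [Matrix.kroneckerMap_apply, Matrix.one_apply] using this

lemma kron_one_mul {d : ℕ} (M N : Matrix (Fin 2 × Fin 2) (Fin 2 × Fin 2) ℂ) :
    (M ⊗ₖ (1 : Matrix (Fin d) (Fin d) ℂ)) * (N ⊗ₖ (1 : Matrix (Fin d) (Fin d) ℂ))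
      = (M * N) ⊗ₖ (1 : Matrix (Fin d) (Fin d) ℂ) := by
  rw [← Matrix.mul_kronecker_mul, one_mul]


lemma neg_kron' {m n : Type*} [DecidableEq m] [DecidableEq n] [Fintype m] [Fintype n]
    (A : Matrix m m ℂ) (B : Matrix n n ℂ) : (-A) ⊗ₖ B = -(A ⊗ₖ B) := by
  ext ⟨i, j⟩ ⟨k, l⟩; simp [Matrix.kroneckerMap_apply]

lemma magic_kron {d : ℕ} (hd : 1 ≤ d)
    (A : Fin 3 → Fin 3 → Matrix (Fin 2 × Fin 2) (Fin 2 × Fin 2) ℂ) :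
    MagicSquare (fun i j => A i j ⊗ₖ (1 : Matrix (Fin d) (Fin d) ℂ)) ↔ MagicSquare A := by
  constructor
  · rintro ⟨h1, h2, h3, h4, h5⟩
    refine ⟨fun i j j' => ?_, fun j i i' => ?_, fun i => ?_, fun j hj => ?_, ?_⟩
    · exact kron_one_inj hd (by rw [← kron_one_mul, ← kron_one_mul]; exact h1 i j j')
    · exact kron_one_inj hd (by rw [← kron_one_mul, ← kron_one_mul]; exact h2 j i i')
    · refine kron_one_inj hd ?_
      rw [← kron_one_mul, ← kron_one_mul, h3 i, Matrix.one_kronecker_one]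
    · refine kron_one_inj hd ?_
      rw [← kron_one_mul, ← kron_one_mul, h4 j hj, Matrix.one_kronecker_one]
    · refine kron_one_inj hd ?_
      rw [← kron_one_mul, ← kron_one_mul, h5, neg_kron', Matrix.one_kronecker_one]
  · rintro ⟨h1, h2, h3, h4, h5⟩
    refine ⟨fun i j j' => ?_, fun j i i' => ?_, fun i => ?_, fun j hj => ?_, ?_⟩
    · rw [kron_one_mul, kron_one_mul, h1 i j j']
    · rw [kron_one_mul, kron_one_mul, h2 j i i']
    · rw [kron_one_mul, kron_one_mul, h3 i, Matrix.one_kronecker_one]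
    · rw [kron_one_mul, kron_one_mul, h4 j hj, Matrix.one_kronecker_one]
    · rw [kron_one_mul, kron_one_mul, h5, neg_kron', Matrix.one_kronecker_one]

lemma smul_one_kron_smul_one (a b : ℂ) :
    (a • (1 : Matrix (Fin 2) (Fin 2) ℂ)) ⊗ₖ (b • (1 : Matrix (Fin 2) (Fin 2) ℂ))
      = (a * b) • (1 : Matrix (Fin 2 × Fin 2) (Fin 2 × Fin 2) ℂ) := by
  rw [Matrix.smul_kronecker, Matrix.kronecker_smul, Matrix.one_kronecker_one, smul_smul]


set_option maxHeartbeats 2000000 in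
/-- For unit vectors x, y, z ∈ ℝ³ and d ≥ 1: {x, y, z} is an orthonormal basis
of ℝ³ iff the table built from σ(x), σ(y), σ(z) padded by the d×d identity
satisfies the magic square equations. -/
theorem orthonormal_iff_magicSquare (x y z : Fin 3 → ℝ) {d : ℕ} (hd : 1 ≤ d)
    (hx : dot3 x x = 1) (hy : dot3 y y = 1) (hz : dot3 z z = 1) :
    (dot3 x y = 0 ∧ dot3 x z = 0 ∧ dot3 y z = 0) ↔ MagicSquare (magicB x y z d) := by
  rw [magicB_eq, magic_kron hd]
  constructor
  · rintro ⟨hxy, hxz, hyz⟩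
    have hzy : dot3 z y = 0 := by rw [dot3_comm]; exact hyz
    have hyx : dot3 y x = 0 := by rw [dot3_comm]; exact hxy
    have hzx : dot3 z x = 0 := by rw [dot3_comm]; exact hxz
    have sx2 := pauli_sq x hx
    have sy2 := pauli_sq y hy
    have sz2 := pauli_sq z hz
    have axz := pauli_anticomm x z hxz
    have azx := pauli_anticomm z x hzx
    have axy := pauli_anticomm x y hxy
    have ayx := pauli_anticomm y x hyx
    have azy := pauli_anticomm z y hzy
    have ayz := pauli_anticomm y z hyz
    set w := cross3 x z with hw
    set t := dot3 w y with ht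
    have ht2 : t * t = 1 := by
      have hid : dot3 (cross3 x z) y * dot3 (cross3 x z) y =
          dot3 x x * (dot3 z z * dot3 y y - dot3 z y * dot3 z y)
          - dot3 x z * (dot3 x z * dot3 y y - dot3 z y * dot3 x y)
          + dot3 x y * (dot3 x z * dot3 z y - dot3 z z * dot3 x y) := by
        simp [dot3, cross3]; ring
      rw [ht, hw, hid, hx, hy, hz, hxy, hxz, hzy]; ring
    have htC : (t : ℂ) * (t : ℂ) = 1 := by exact_mod_cast ht2
    have hwy0 : ∀ i, cross3 w y i = 0 := by
      intro i; rw [hw, bac_cab, hxy, hzy]; ring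
    have hXZ : pauliVec x * pauliVec z = Complex.I • pauliVec w := by
      rw [pauli_mul, hxz]; simp [hw]
    have hZX : pauliVec z * pauliVec x = -(Complex.I • pauliVec w) := by
      rw [axz, hXZ]
    have hWY : pauliVec w * pauliVec y = ((t : ℝ) : ℂ) • 1 := by
      rw [pauli_mul, pauliVec_zero' _ hwy0, ← ht]; simp
    have hXZY : pauliVec x * pauliVec z * pauliVec y
        = (Complex.I * t) • (1 : Matrix (Fin 2) (Fin 2) ℂ) := by
      rw [hXZ, smul_mul_assoc, hWY, smul_smul]
    have hZXY : pauliVec z * pauliVec x * pauliVec y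
        = -((Complex.I * t) • (1 : Matrix (Fin 2) (Fin 2) ℂ)) := by
      rw [hZX, neg_mul, smul_mul_assoc, hWY, smul_smul]
    refine ⟨?_, ?_, ?_, ?_, ?_⟩
    · intro i j j'
      fin_cases i <;> fin_cases j <;> fin_cases j' <;>
        simp only [fin3_mk0, fin3_mk1, fin3_mk2, B4_00, B4_01, B4_02, B4_10, B4_11, B4_12, B4_20, B4_21, B4_22] <;>
        first
          | rfl
          | exact kron_comm_of (by simp) (by simp)
          | exact kron_comm_of_anti (by assumption) (by assumption)
    · intro j i i'
      fin_cases j <;> fin_cases i <;> fin_cases i' <;>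
        simp only [fin3_mk0, fin3_mk1, fin3_mk2, B4_00, B4_01, B4_02, B4_10, B4_11, B4_12, B4_20, B4_21, B4_22] <;>
        first
          | rfl
          | exact kron_comm_of (by simp) (by simp)
          | exact kron_comm_of_anti (by assumption) (by assumption)
    · intro i
      fin_cases i <;>
        simp only [fin3_mk0, fin3_mk1, fin3_mk2, B4_00, B4_01, B4_02, B4_10, B4_11, B4_12, B4_20, B4_21, B4_22]
      · simp only [← Matrix.mul_kronecker_mul, mul_one, one_mul, sx2,
          Matrix.one_kronecker_one]
      · simp only [← Matrix.mul_kronecker_mul, mul_one, one_mul, sz2,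
          Matrix.one_kronecker_one]
      · rw [← Matrix.mul_kronecker_mul, ← Matrix.mul_kronecker_mul, hXZY, hZXY,
          ← neg_smul, smul_one_kron_smul_one,
          show Complex.I * ↑t * -(Complex.I * ↑t) = 1 from by
            linear_combination htC - (t : ℂ) * (t : ℂ) * Complex.I_sq,
          one_smul]
    · intro j hj
      fin_cases j
      · simp only [fin3_mk0, fin3_mk1, fin3_mk2, B4_00, B4_01, B4_02, B4_10, B4_11, B4_12, B4_20, B4_21, B4_22]
        simp only [← Matrix.mul_kronecker_mul, mul_one, one_mul, sx2, sz2,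
          Matrix.one_kronecker_one]
      · simp only [fin3_mk0, fin3_mk1, fin3_mk2, B4_00, B4_01, B4_02, B4_10, B4_11, B4_12, B4_20, B4_21, B4_22]
        simp only [← Matrix.mul_kronecker_mul, mul_one, one_mul, sx2, sz2,
          Matrix.one_kronecker_one]
      · simp at hj
    · simp only [B4_02, B4_12, B4_22]
      rw [← Matrix.mul_kronecker_mul, ← Matrix.mul_kronecker_mul, hXZY,
        smul_one_kron_smul_one,
        show Complex.I * ↑t * (Complex.I * ↑t) = -1 from by
          linear_combination -htC + (t : ℂ) * (t : ℂ) * Complex.I_sq]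
      simp
  · rintro ⟨h1, h2, h3, h4, h5⟩
    have E1 := h1 2 0 1
    have E2 := h1 2 0 2
    simp only [B4_20, B4_21, B4_22, B4_02, B4_12] at E1 E2 h5
    rw [← Matrix.mul_kronecker_mul, ← Matrix.mul_kronecker_mul] at E1 E2 h5
    have e1 := Matrix.ext_iff.2 E1 ((0 : Fin 2), (0 : Fin 2)) ((1 : Fin 2), (0 : Fin 2))
    have e2 := Matrix.ext_iff.2 E1 ((0 : Fin 2), (1 : Fin 2)) ((0 : Fin 2), (1 : Fin 2))
    simp [Matrix.kroneckerMap_apply, Matrix.mul_apply, Fin.sum_univ_two, Complex.ext_iff]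
      at e1 e2
    have hcu0 : dot3 x z * cross3 x z 0 = 0 := by
      simp only [dot3, cross3, Matrix.cons_val_zero]
      linear_combination e1.2 / 2
    have hcu1 : dot3 x z * cross3 x z 1 = 0 := by
      simp only [dot3, cross3, Matrix.cons_val_one, Matrix.head_cons, Matrix.cons_val_zero]
      linear_combination e1.1 / 2
    have hcu2 : dot3 x z * cross3 x z 2 = 0 := by
      simp only [dot3, cross3, Matrix.cons_val_two, Matrix.tail_cons, Matrix.head_cons]
      linear_combination e2.2 / 4
    have f1 := Matrix.ext_iff.2 E2 ((0 : Fin 2), (0 : Fin 2)) ((0 : Fin 2), (1 : Fin 2))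
    have f2 := Matrix.ext_iff.2 E2 ((0 : Fin 2), (0 : Fin 2)) ((1 : Fin 2), (0 : Fin 2))
    have f3 := Matrix.ext_iff.2 E2 ((0 : Fin 2), (0 : Fin 2)) ((0 : Fin 2), (0 : Fin 2))
    have f4 := Matrix.ext_iff.2 E2 ((0 : Fin 2), (1 : Fin 2)) ((0 : Fin 2), (1 : Fin 2))
    simp [Matrix.kroneckerMap_apply, Matrix.mul_apply, Fin.sum_univ_two, Complex.ext_iff]
      at f1 f2 f3 f4
    have hps0 : dot3 x y * cross3 z y 0 = 0 := by
      simp only [dot3, cross3, Matrix.cons_val_zero]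
      linear_combination f1.2 / 2
    have hps1 : dot3 x y * cross3 z y 1 = 0 := by
      simp only [dot3, cross3, Matrix.cons_val_one, Matrix.head_cons, Matrix.cons_val_zero]
      linear_combination f1.1 / 2
    have hps2 : dot3 x y * cross3 z y 2 = 0 := by
      simp only [dot3, cross3, Matrix.cons_val_two, Matrix.tail_cons, Matrix.head_cons]
      linear_combination (f3.2 - f4.2) / 4
    have hqr0 : dot3 z y * cross3 x y 0 = 0 := by
      simp only [dot3, cross3, Matrix.cons_val_zero]
      linear_combination f2.2 / 2
    have hqr1 : dot3 z y * cross3 x y 1 = 0 := by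
      simp only [dot3, cross3, Matrix.cons_val_one, Matrix.head_cons, Matrix.cons_val_zero]
      linear_combination f2.1 / 2
    have hqr2 : dot3 z y * cross3 x y 2 = 0 := by
      simp only [dot3, cross3, Matrix.cons_val_two, Matrix.tail_cons, Matrix.head_cons]
      linear_combination (f3.2 + f4.2) / 4
    have hxz0 : dot3 x z = 0 := by
      by_contra hc
      have hu : ∀ i : Fin 3, cross3 x z i = 0 := by
        intro i
        fin_cases i
        · exact (mul_eq_zero.mp hcu0).resolve_left hc
        · exact (mul_eq_zero.mp hcu1).resolve_left hc
        · exact (mul_eq_zero.mp hcu2).resolve_left hc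
      have hc2 : dot3 x z * dot3 x z = 1 := by
        have hl := lagrange x z
        have hu0 : dot3 (cross3 x z) (cross3 x z) = 0 := by
          simp [dot3, hu 0, hu 1, hu 2]
        rw [hu0, hx, hz] at hl
        nlinarith [hl]
      have hxi : ∀ i, x i = dot3 x z * z i := by
        intro i
        have hb := bac_cab x z z i
        have h0 : cross3 (cross3 x z) z i = 0 := cross3_zero_left _ z hu i
        rw [h0, hz] at hb
        linarith
      have hPX : pauliVec x = ((dot3 x z : ℝ) : ℂ) • pauliVec z :=
        pauliVec_smul' _ _ _ hxi
      rw [hPX] at h5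
      have hred : ((dot3 x z : ℝ) : ℂ) • pauliVec z * pauliVec z * pauliVec y
          = ((dot3 x z : ℝ) : ℂ) • pauliVec y := by
        rw [smul_mul_assoc, smul_mul_assoc, pauli_sq z hz, one_mul]
      rw [hred, Matrix.smul_kronecker, Matrix.kronecker_smul, smul_smul] at h5
      have hcc : ((dot3 x z : ℝ) : ℂ) * ((dot3 x z : ℝ) : ℂ) = 1 := by exact_mod_cast hc2
      rw [hcc, one_smul] at h5
      have e := Matrix.ext_iff.2 h5 ((0 : Fin 2), (0 : Fin 2)) ((0 : Fin 2), (0 : Fin 2))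
      simp [Matrix.kroneckerMap_apply, Complex.ext_iff] at e
      first
        | nlinarith [e, sq_nonneg (y 2)]
        | nlinarith [e.1, sq_nonneg (y 2)]
    have key : dot3 x y = 0 ∧ dot3 z y = 0 := by
      by_contra hk
      push_neg at hk
      have himp1 : dot3 x y ≠ 0 → ∀ i : Fin 3, cross3 z y i = 0 := by
        intro hp i
        fin_cases i
        · exact (mul_eq_zero.mp hps0).resolve_left hp
        · exact (mul_eq_zero.mp hps1).resolve_left hp
        · exact (mul_eq_zero.mp hps2).resolve_left hp
      have himp2 : (∀ i : Fin 3, cross3 z y i = 0) → dot3 z y ≠ 0 := by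
        intro hs h0
        have hl := lagrange z y
        have hs0 : dot3 (cross3 z y) (cross3 z y) = 0 := by
          simp [dot3, hs 0, hs 1, hs 2]
        rw [hs0, hz, hy, h0] at hl
        norm_num at hl
      have himp3 : dot3 z y ≠ 0 → ∀ i : Fin 3, cross3 x y i = 0 := by
        intro hq i
        fin_cases i
        · exact (mul_eq_zero.mp hqr0).resolve_left hq
        · exact (mul_eq_zero.mp hqr1).resolve_left hq
        · exact (mul_eq_zero.mp hqr2).resolve_left hq
      have himp4 : (∀ i : Fin 3, cross3 x y i = 0) → dot3 x y ≠ 0 := by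
        intro hr h0
        have hl := lagrange x y
        have hr0 : dot3 (cross3 x y) (cross3 x y) = 0 := by
          simp [dot3, hr 0, hr 1, hr 2]
        rw [hr0, hx, hy, h0] at hl
        norm_num at hl
      have both : dot3 x y ≠ 0 ∧ dot3 z y ≠ 0 := by
        by_cases hp : dot3 x y = 0
        · have hq : dot3 z y ≠ 0 := by tauto
          exact ⟨himp4 (himp3 hq), hq⟩
        · exact ⟨hp, himp2 (himp1 hp)⟩
      obtain ⟨pne, qne⟩ := both
      set p := dot3 x y with hp
      set q := dot3 z y with hq
      have hr := himp3 qne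
      have hs := himp1 pne
      have hxi : ∀ i, x i = dot3 x y * y i := by
        intro i
        have hb := bac_cab x y y i
        have h0 : cross3 (cross3 x y) y i = 0 := cross3_zero_left _ y hr i
        rw [h0, hy] at hb
        linarith
      have hzi : ∀ i, z i = dot3 z y * y i := by
        intro i
        have hb := bac_cab z y y i
        have h0 : cross3 (cross3 z y) y i = 0 := cross3_zero_left _ y hs i
        rw [h0, hy] at hb
        linarith
      have hfin : dot3 x z = p * q * dot3 y y := by
        simp only [dot3]
        linear_combination z 0 * hxi 0 + z 1 * hxi 1 + z 2 * hxi 2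
          + p * y 0 * hzi 0 + p * y 1 * hzi 1 + p * y 2 * hzi 2
      rw [hxz0, hy, mul_one] at hfin
      exact mul_ne_zero pne qne hfin.symm
    exact ⟨key.1, hxz0, by rw [dot3_comm]; exact key.2⟩
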